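/- Let f be a nonconstant map in C(Σ, M). Then there exist ε > 0 and a compact subset K of ℂ × ℂ contained in (ℂ \ {0}) × ℂ such that for every h ∈ C(Σ, M) with d(h, f) < ε and every pair (a, c) with a ≠ 0 and (a, c) ∉ K, one has d(h ∘ g_{a,c}, f) ≥ ε. In particular, for every such (a, c) outside K the reparametrized map f ∘ g_{a,c} satisfies d(f ∘ g_{a,c}, f) ≥ ε. -/

import Mathlib

open OnePoint Metric Filter Bornology Topology

/-- The reparametrization `g_{a,c} : Σ → Σ` of the Riemann sphere `Σ = OnePoint ℂ`
extending `z ↦ a · (z − c)` on `ℂ` and fixing the point at infinity. -/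
noncomputable def gAff (a c : ℂ) (ha : a ≠ 0) : C(OnePoint ℂ, OnePoint ℂ) where
  toFun := OnePoint.map (fun z => a * (z - c))
  continuous_toFun :=
    (Homeomorph.onePointCongr ((Homeomorph.subRight c).trans (Homeomorph.mulLeft₀ a ha))).continuous

/-- For a nonconstant continuous map `f : Σ → M`, the affine-group orbit of any map near `f`
never returns to a small neighbourhood of `f` outside a compact set of reparametrizations; in
particular the orbit of `f` itself never returns to the `ε`-neighbourhood of `f`. -/
theorem orbit_never_returns_affine {M : Type*} [MetricSpace M] [CompactSpace M]
    (f : C(OnePoint ℂ, M)) (hf : ∃ x y, f x ≠ f y) :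
    ∃ ε > 0, ∃ K : Set (ℂ × ℂ), IsCompact K ∧
      K ⊆ ({0}ᶜ : Set ℂ) ×ˢ (Set.univ : Set ℂ) ∧
      (∀ h : C(OnePoint ℂ, M), dist h f < ε →
        ∀ (a c : ℂ) (ha : a ≠ 0), (a, c) ∉ K → ε ≤ dist (h.comp (gAff a c ha)) f) ∧
      (∀ (a c : ℂ) (ha : a ≠ 0), (a, c) ∉ K → ε ≤ dist (f.comp (gAff a c ha)) f) := by
  -- Step 1: a finite point where f differs from f ∞
  obtain ⟨z₁, hz₁⟩ : ∃ z₁ : ℂ, 0 < dist (f ↑z₁) (f ∞) := by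
    obtain ⟨x, y, hxy⟩ := hf
    by_contra hc
    push_neg at hc
    have key : ∀ u : OnePoint ℂ, f u = f ∞ := by
      intro u
      cases u with
      | infty => rfl
      | coe z => have := hc z; simpa using this
    exact hxy ((key x).trans (key y).symm)
  set δ : ℝ := dist (f ↑z₁) (f ∞) with hδdef
  set ε : ℝ := δ / 4 with hεdef
  have hε : 0 < ε := by positivity
  -- Step 2: tail bound at ∞
  obtain ⟨R, hR1, hR⟩ : ∃ R : ℝ, 1 ≤ R ∧ ∀ z : ℂ, R < ‖z‖ → dist (f ↑z) (f ∞) < ε := by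
    have h1 : Tendsto (fun z : ℂ => f ↑z) (cobounded ℂ) (𝓝 (f ∞)) := by
      have := (f.continuous.tendsto ∞).comp tendsto_coe_infty
      rwa [Filter.coclosedCompact_eq_cocompact, ← Metric.cobounded_eq_cocompact] at this
    have h2 : {z : ℂ | dist (f ↑z) (f ∞) < ε} ∈ cobounded ℂ :=
      h1 (Metric.ball_mem_nhds _ hε)
    rw [(Metric.hasBasis_cobounded_compl_ball (0:ℂ)).mem_iff] at h2
    obtain ⟨R, -, hR⟩ := h2
    refine ⟨max R 1, le_max_right _ _, fun z hz => ?_⟩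
    apply hR
    simp only [Set.mem_compl_iff, mem_ball, dist_zero_right, not_lt]
    exact le_of_lt (lt_of_le_of_lt (le_max_left R 1) hz)
  have hRpos : (0:ℝ) < R := lt_of_lt_of_le one_pos hR1
  -- Step 3: continuity at z₁
  obtain ⟨ρ, hρpos, hρ⟩ : ∃ ρ > 0, ∀ w : ℂ, dist w z₁ < ρ → dist (f ↑w) (f ↑z₁) < ε := by
    have hc : Continuous fun z : ℂ => f ↑z := f.continuous.comp OnePoint.continuous_coe
    exact Metric.continuous_iff.mp hc z₁ ε hε
  set ρ0 : ℝ := min ρ 1 with hρ0def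
  have hρ0pos : 0 < ρ0 := lt_min hρpos one_pos
  have hρ0le : ρ0 ≤ ρ := min_le_left _ _
  have hρ0le1 : ρ0 ≤ 1 := min_le_right _ _
  set r : ℝ := ρ0 / (4 * R) with hrdef
  have hrpos : 0 < r := by positivity
  set A : ℝ := 4 * R / ρ0 with hAdef
  set C : ℝ := R + ‖z₁‖ / r with hCdef
  set K : Set (ℂ × ℂ) := (closedBall (0:ℂ) A \ ball (0:ℂ) r) ×ˢ closedBall (0:ℂ) C with hKdef
  have hKcompact : IsCompact K :=
    ((isCompact_closedBall (0:ℂ) A).diff isOpen_ball).prod (isCompact_closedBall (0:ℂ) C)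
  have hKsub : K ⊆ ({0}ᶜ : Set ℂ) ×ˢ (Set.univ : Set ℂ) := by
    rintro ⟨a, c⟩ ⟨⟨-, ha⟩, -⟩
    simp only [mem_ball, dist_zero_right, not_lt] at ha
    refine ⟨?_, trivial⟩
    simp only [Set.mem_compl_iff, Set.mem_singleton_iff]
    intro h0
    rw [h0] at ha
    simp at ha
    linarith
  -- The key quantitative lemma
  have hkey : ∀ (a c : ℂ), a ≠ 0 →
      (∀ z : ℂ, dist (f ↑(a * (z - c))) (f ↑z) < 2 * ε) → (a, c) ∈ K := by
    intro a c ha hyp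
    have hδle : δ ≤ dist (f ↑z₁) (f ∞) := le_rfl
    have stepA : ∀ w : ℂ, dist w z₁ < ρ0 → ‖a * (w - c)‖ ≤ R := by
      intro w hw
      by_contra h'
      push_neg at h'
      have hinf : dist (f ↑(a * (w - c))) (f ∞) < ε := hR _ h'
      have hwz : dist (f ↑w) (f ↑z₁) < ε := hρ w (lt_of_lt_of_le hw hρ0le)
      have hz := hyp w
      have htri := dist_triangle4 (f ↑z₁) (f ↑w) (f ↑(a * (w - c))) (f ∞)
      have h1 : dist (f ↑z₁) (f ↑w) = dist (f ↑w) (f ↑z₁) := dist_comm _ _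
      have h2 : dist (f ↑w) (f ↑(a * (w - c))) = dist (f ↑(a * (w - c))) (f ↑w) := dist_comm _ _
      rw [hεdef] at hinf hwz hz
      linarith
    have stepB : ∀ w : ℂ, dist w z₁ < ρ0 → ‖w / a + c‖ ≤ R := by
      intro w hw
      have heq : a * ((w / a + c) - c) = w := by field_simp; ring
      have hz := hyp (w / a + c)
      rw [heq] at hz
      by_contra h'
      push_neg at h'
      have hinf : dist (f ↑(w / a + c)) (f ∞) < ε := hR _ h'
      have hwz : dist (f ↑w) (f ↑z₁) < ε := hρ w (lt_of_lt_of_le hw hρ0le)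
      have htri := dist_triangle4 (f ↑z₁) (f ↑w) (f ↑(w / a + c)) (f ∞)
      have h1 : dist (f ↑z₁) (f ↑w) = dist (f ↑w) (f ↑z₁) := dist_comm _ _
      have h2 : dist (f ↑w) (f ↑(w / a + c)) = dist (f ↑(w / a + c)) (f ↑w) := dist_comm _ _
      rw [hεdef] at hinf hwz hz
      linarith
    have hw2mem : dist (z₁ + (ρ0 / 2 : ℝ)) z₁ < ρ0 := by
      rw [Complex.dist_eq]
      simp only [add_sub_cancel_left, Complex.norm_real, Real.norm_eq_abs]
      rw [abs_of_pos (by positivity)]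
      linarith
    have hw1mem : dist z₁ z₁ < ρ0 := by simpa using hρ0pos
    -- bound ‖a‖ from above
    have hAbound : ‖a‖ ≤ A := by
      have h1 := stepA z₁ hw1mem
      have h2 := stepA (z₁ + (ρ0 / 2 : ℝ)) hw2mem
      have heq : a * ((ρ0 / 2 : ℝ) : ℂ) = a * ((z₁ + (ρ0 / 2 : ℝ)) - c) - a * (z₁ - c) := by ring
      have h3 : ‖a * ((ρ0 / 2 : ℝ) : ℂ)‖ ≤ 2 * R := by
        rw [heq]
        calc ‖a * ((z₁ + (ρ0 / 2 : ℝ)) - c) - a * (z₁ - c)‖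
            ≤ ‖a * ((z₁ + (ρ0 / 2 : ℝ)) - c)‖ + ‖a * (z₁ - c)‖ := norm_sub_le _ _
          _ ≤ 2 * R := by linarith
      rw [norm_mul, Complex.norm_real, Real.norm_eq_abs, abs_of_pos (by positivity : (0:ℝ) < ρ0 / 2)] at h3
      rw [hAdef, le_div_iff₀ hρ0pos]
      nlinarith [norm_nonneg a]
    -- bound ‖a‖ from below
    have hanorm : 0 < ‖a‖ := norm_pos_iff.2 ha
    have hrbound : r ≤ ‖a‖ := by
      have h1 := stepB z₁ hw1mem
      have h2 := stepB (z₁ + (ρ0 / 2 : ℝ)) hw2mem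
      have heq : ((ρ0 / 2 : ℝ) : ℂ) / a = ((z₁ + (ρ0 / 2 : ℝ)) / a + c) - (z₁ / a + c) := by
        field_simp
        ring
      have h3 : ‖((ρ0 / 2 : ℝ) : ℂ) / a‖ ≤ 2 * R := by
        rw [heq]
        calc ‖((z₁ + (ρ0 / 2 : ℝ)) / a + c) - (z₁ / a + c)‖
            ≤ ‖(z₁ + (ρ0 / 2 : ℝ)) / a + c‖ + ‖z₁ / a + c‖ := norm_sub_le _ _
          _ ≤ 2 * R := by linarith
      rw [norm_div, Complex.norm_real, Real.norm_eq_abs, abs_of_pos (by positivity : (0:ℝ) < ρ0 / 2),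
        div_le_iff₀ hanorm] at h3
      rw [hrdef, div_le_iff₀ (by positivity : (0:ℝ) < 4 * R)]
      nlinarith
    -- bound ‖c‖
    have hCbound : ‖c‖ ≤ C := by
      have h1 := stepB z₁ hw1mem
      have heq : c = (z₁ / a + c) - z₁ / a := by ring
      have h2 : ‖c‖ ≤ R + ‖z₁‖ / ‖a‖ := by
        rw [heq]
        calc ‖(z₁ / a + c) - z₁ / a‖ ≤ ‖z₁ / a + c‖ + ‖z₁ / a‖ := norm_sub_le _ _
          _ ≤ R + ‖z₁‖ / ‖a‖ := by rw [norm_div]; linarith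
      have h3 : ‖z₁‖ / ‖a‖ ≤ ‖z₁‖ / r := by gcongr
      rw [hCdef]
      linarith
    constructor
    · constructor
      · simpa [mem_closedBall, dist_zero_right] using hAbound
      · simp only [mem_ball, dist_zero_right, not_lt]
        exact hrbound
    · simpa [mem_closedBall, dist_zero_right] using hCbound
  -- Main conclusion
  have main : ∀ h : C(OnePoint ℂ, M), dist h f < ε →
      ∀ (a c : ℂ) (ha : a ≠ 0), (a, c) ∉ K → ε ≤ dist (h.comp (gAff a c ha)) f := by
    intro h hh a c ha hK
    by_contra hlt
    push_neg at hlt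
    apply hK
    apply hkey a c ha
    intro z
    have e1 : dist (f ↑(a * (z - c))) (h ↑(a * (z - c))) ≤ dist f h :=
      ContinuousMap.dist_apply_le_dist _
    have e2 : dist (h ↑(a * (z - c))) (f ↑z) ≤ dist (h.comp (gAff a c ha)) f := by
      have : (h.comp (gAff a c ha)) ↑z = h ↑(a * (z - c)) := rfl
      rw [← this]
      exact ContinuousMap.dist_apply_le_dist _
    have e3 : dist f h = dist h f := dist_comm _ _
    have := dist_triangle (f ↑(a * (z - c))) (h ↑(a * (z - c))) (f ↑z)
    linarith
  exact ⟨ε, hε, K, hKcompact, hKsub, main, fun a c ha hK =>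
    main f (by simpa using hε) a c ha hK⟩
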